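/- Let n ≥ 5 be odd and let the configuration consist of the n vertices of a regular n-gon and its center C. For any two adjacent vertices P,Q of the n-gon, n(P,Q) = 1: the unique separating line spanned by two other points of the configuration passes through the center. -/

import Mathlib

open scoped Classical

noncomputable section

/-- Orientation determinant of two vectors in the plane. -/
def det2 (u v : ℝ × ℝ) : ℝ := u.1 * v.2 - u.2 * v.1

/-- The line through `A` and `B` separates the points `P` and `Q`
(they lie in distinct open half-planes determined by the line). -/
def SepLine (A B P Q : ℝ × ℝ) : Prop :=
  det2 (B - A) (P - A) * det2 (B - A) (Q - A) < 0

/-- A finite planar point set is a generic configuration if no three of its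
points are collinear. -/
def Generic (C : Finset (ℝ × ℝ)) : Prop :=
  ∀ a ∈ C, ∀ b ∈ C, ∀ c ∈ C, a ≠ b → a ≠ c → b ≠ c →
    ¬ Collinear ℝ ({a, b, c} : Set (ℝ × ℝ))

/-- `nsep C P Q` is the number of lines spanned by (unordered) pairs of points of
`C \ {P,Q}` that separate `P` from `Q`. -/
def nsep (C : Finset (ℝ × ℝ)) (P Q : ℝ × ℝ) : ℕ :=
  (((C \ {P, Q}).powersetCard 2).filter
    (fun s => ∃ A ∈ s, ∃ B ∈ s, A ≠ B ∧ SepLine A B P Q)).card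

/-- The Orchard relation: `P ∼ Q` iff `n(P,Q) ≡ n - 3 (mod 2)` where `n = |C|`. -/
def Orchard (C : Finset (ℝ × ℝ)) (P Q : ℝ × ℝ) : Prop :=
  (nsep C P Q : ℤ) ≡ (C.card : ℤ) - 3 [ZMOD 2]

/-- A configuration is monochromatic if all its points are Orchard-equivalent. -/
def Mono (C : Finset (ℝ × ℝ)) : Prop :=
  ∀ P ∈ C, ∀ Q ∈ C, P ≠ Q → Orchard C P Q

/-- A configuration is in convex position if each of its points is a vertex of
the convex hull. -/
def ConvexPos (C : Finset (ℝ × ℝ)) : Prop :=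
  ∀ P ∈ C, P ∉ convexHull ℝ ((C : Set (ℝ × ℝ)) \ {P})

/-- The `k`-th vertex of the regular `n`-gon inscribed in the unit circle
centered at the origin. -/
def vtx (n : ℕ) (k : Fin n) : ℝ × ℝ :=
  (Real.cos (2 * Real.pi * k / n), Real.sin (2 * Real.pi * k / n))

/-- The configuration consisting of the vertices of the regular `n`-gon together
with its barycenter (the origin). -/
def ngonWithCenter (n : ℕ) : Finset (ℝ × ℝ) :=
  insert ((0, 0) : ℝ × ℝ) (Finset.image (vtx n) Finset.univ)

lemma og_tri (u v : ℝ) : Real.sin (2*(v-u)) + Real.sin (2*u) - Real.sin (2*v)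
    = 4 * Real.sin u * Real.sin v * Real.sin (v-u) := by
  rw [Real.sin_two_mul, Real.sin_two_mul, Real.sin_two_mul, Real.sin_sub, Real.cos_sub]
  linear_combination (2*Real.sin v*Real.cos v) * (Real.sin_sq_add_cos_sq u)
    - (2*Real.sin u*Real.cos u) * (Real.sin_sq_add_cos_sq v)

lemma og_detc (x y z : ℝ) :
    (Real.cos y - Real.cos x) * (Real.sin z - Real.sin x)
      - (Real.sin y - Real.sin x) * (Real.cos z - Real.cos x)
    = 4 * Real.sin ((y-x)/2) * Real.sin ((z-x)/2) * Real.sin ((z-y)/2) := by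
  have h1 : (Real.cos y - Real.cos x) * (Real.sin z - Real.sin x)
      - (Real.sin y - Real.sin x) * (Real.cos z - Real.cos x)
      = Real.sin (z - y) + Real.sin (y - x) - Real.sin (z - x) := by
    rw [Real.sin_sub, Real.sin_sub, Real.sin_sub]; ring
  have h2 := og_tri ((y-x)/2) ((z-x)/2)
  have e1 : 2*((z-x)/2 - (y-x)/2) = z - y := by ring
  have e2 : 2*((y-x)/2) = y - x := by ring
  have e3 : 2*((z-x)/2) = z - x := by ring
  have e4 : (z-x)/2 - (y-x)/2 = (z-y)/2 := by ring
  rw [e1, e2, e3, e4] at h2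
  rw [h1, h2]

lemma og_sinpos {n : ℕ} (hn : 0 < n) {x : ℝ} (h1 : 0 < x) (h2 : x < n) :
    0 < Real.sin (Real.pi * x / n) := by
  apply Real.sin_pos_of_pos_of_lt_pi
  · positivity
  · rw [div_lt_iff₀ (by positivity)]
    nlinarith [Real.pi_pos]

lemma og_sinneg {n : ℕ} (hn : 0 < n) {x : ℝ} (h1 : -(n:ℝ) < x) (h2 : x < 0) :
    Real.sin (Real.pi * x / n) < 0 := by
  have := og_sinpos hn (x := -x) (by linarith) (by linarith)
  have e : Real.pi * (-x) / n = -(Real.pi * x / n) := by ring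
  rw [e, Real.sin_neg] at this; linarith

lemma og_sinneg2 {n : ℕ} (hn : 0 < n) {x : ℝ} (h1 : (n:ℝ) < x) (h2 : x < 2*n) :
    Real.sin (Real.pi * x / n) < 0 := by
  have hn0 : (n:ℝ) ≠ 0 := by positivity
  have h3 := og_sinneg hn (x := x - 2*n) (by linarith) (by linarith)
  have e : Real.pi * x / n = Real.pi * (x - 2*n) / n + (1:ℤ) * (2 * Real.pi) := by
    field_simp; ring
  rw [e, Real.sin_add_int_mul_two_pi]; exact h3

lemma og_findiff (n : ℕ) [NeZero n] (a b : Fin n) :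
    ∃ t : ℤ, (a.val : ℤ) - b.val = (a - b).val + n * t := by
  have h : (a - b).val = (n - b.val + a.val) % n := by rw [Fin.sub_def]
  have hb : b.val ≤ n := le_of_lt b.isLt
  have h2 : ((a - b).val : ℤ) = ((n : ℤ) - b.val + a.val) % n := by
    rw [h]; push_cast [Nat.cast_sub hb]; ring_nf
  refine ⟨((n : ℤ) - b.val + a.val) / n - 1, ?_⟩
  have h3 := Int.mul_ediv_add_emod ((n : ℤ) - b.val + a.val) n
  rw [h2]; linarith [h3]

lemma og_sin_vtx_diff (n : ℕ) [NeZero n] (a b : Fin n) :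
    Real.sin (2*Real.pi*a.val/n - 2*Real.pi*b.val/n)
      = Real.sin (2*Real.pi*((a-b).val)/n) := by
  obtain ⟨t, ht⟩ := og_findiff n a b
  have hn0 : (n:ℝ) ≠ 0 := Nat.cast_ne_zero.mpr (NeZero.ne n)
  have htr : (a.val : ℝ) - b.val = ((a - b).val : ℝ) + n * t := by exact_mod_cast ht
  have e : 2*Real.pi*a.val/n - 2*Real.pi*b.val/n
      = 2*Real.pi*((a-b).val)/n + t * (2 * Real.pi) := by
    field_simp
    nlinarith [htr, Real.pi_pos]
  rw [e, Real.sin_add_int_mul_two_pi]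

lemma og_det2_swap (A B P : ℝ × ℝ) : det2 (A - B) (P - B) = - det2 (B - A) (P - A) := by
  simp only [det2, Prod.fst_sub, Prod.snd_sub]; ring

lemma og_sep_symm {A B P Q : ℝ × ℝ} (h : SepLine A B P Q) : SepLine B A P Q := by
  unfold SepLine at *
  rw [og_det2_swap A B P, og_det2_swap A B Q, neg_mul_neg]
  exact h

lemma og_vtx_inj (n : ℕ) [NeZero n] : Function.Injective (vtx n) := by
  intro i j hij
  have hn : 0 < n := Nat.pos_of_ne_zero (NeZero.ne n)
  have hnp : (0:ℝ) < n := by exact_mod_cast hn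
  rw [vtx, vtx, Prod.mk.injEq] at hij
  obtain ⟨h1, h2⟩ := hij
  have hc : Real.cos (2*Real.pi*i/n - 2*Real.pi*j/n) = 1 := by
    rw [Real.cos_sub, h1, h2]
    linear_combination Real.sin_sq_add_cos_sq (2*Real.pi*j/n)
  have hi : (i.val:ℝ) < n := by exact_mod_cast i.isLt
  have hj : (j.val:ℝ) < n := by exact_mod_cast j.isLt
  have hi0 : (0:ℝ) ≤ i.val := by positivity
  have hj0 : (0:ℝ) ≤ j.val := by positivity
  have hb1 : -(2*Real.pi) < 2*Real.pi*i/n - 2*Real.pi*j/n := by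
    rw [div_sub_div_same, neg_lt, ← neg_div, div_lt_iff₀ hnp]
    nlinarith [Real.pi_pos]
  have hb2 : 2*Real.pi*i/n - 2*Real.pi*j/n < 2*Real.pi := by
    rw [div_sub_div_same, div_lt_iff₀ hnp]
    nlinarith [Real.pi_pos]
  have h0 := (Real.cos_eq_one_iff_of_lt_of_lt hb1 hb2).mp hc
  have h3 : (i.val:ℝ) = j.val := by
    field_simp at h0
    have h5 : 2*Real.pi*(i.val:ℝ) = 2*Real.pi*(j.val:ℝ) := by linarith
    exact mul_left_cancel₀ (by positivity) h5
  exact Fin.ext (by exact_mod_cast h3)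

lemma og_vtx_ne_zero (n : ℕ) (i : Fin n) : vtx n i ≠ ((0,0) : ℝ × ℝ) := by
  intro h
  rw [vtx, Prod.mk.injEq] at h
  obtain ⟨h1, h2⟩ := h
  have := Real.sin_sq_add_cos_sq (2*Real.pi*i/n)
  rw [h1, h2] at this
  norm_num at this

lemma og_det_vtx (n : ℕ) [NeZero n] (i j p : Fin n) :
    det2 (vtx n j - vtx n i) (vtx n p - vtx n i)
      = 4 * Real.sin (Real.pi * ((j.val:ℝ) - i.val)/n)
        * Real.sin (Real.pi * ((p.val:ℝ) - i.val)/n)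
        * Real.sin (Real.pi * ((p.val:ℝ) - j.val)/n) := by
  have h := og_detc (2*Real.pi*i.val/n) (2*Real.pi*j.val/n) (2*Real.pi*p.val/n)
  have e1 : (2*Real.pi*j.val/n - 2*Real.pi*i.val/n)/2 = Real.pi * ((j.val:ℝ) - i.val)/n := by
    ring
  have e2 : (2*Real.pi*p.val/n - 2*Real.pi*i.val/n)/2 = Real.pi * ((p.val:ℝ) - i.val)/n := by
    ring
  have e3 : (2*Real.pi*p.val/n - 2*Real.pi*j.val/n)/2 = Real.pi * ((p.val:ℝ) - j.val)/n := by
    ring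
  rw [e1, e2, e3] at h
  simp only [vtx, det2, Prod.fst_sub, Prod.snd_sub]
  convert h using 2

lemma og_det_center (n : ℕ) [NeZero n] (i p : Fin n) :
    det2 (vtx n i - ((0,0):ℝ×ℝ)) (vtx n p - ((0,0):ℝ×ℝ))
      = Real.sin (2*Real.pi*p.val/n - 2*Real.pi*i.val/n) := by
  simp only [vtx, det2, Prod.fst_sub, Prod.snd_sub, Real.sin_sub]
  ring

lemma og_s_pos {n : ℕ} (hn : 0 < n) {d : ℕ} (h1 : 0 < d) (h2 : 2*d < n) :
    0 < Real.sin (2*Real.pi*(d:ℝ)/n) := by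
  have e : 2*Real.pi*(d:ℝ)/n = Real.pi * ((2*d : ℕ) : ℝ) / n := by push_cast; ring
  rw [e]
  exact og_sinpos hn (by exact_mod_cast (by omega : 0 < 2*d)) (by exact_mod_cast h2)

lemma og_s_neg {n : ℕ} (hn : 0 < n) {d : ℕ} (h1 : n < 2*d) (h2 : d < n) :
    Real.sin (2*Real.pi*(d:ℝ)/n) < 0 := by
  have e : 2*Real.pi*(d:ℝ)/n = Real.pi * ((2*d : ℕ) : ℝ) / n := by push_cast; ring
  rw [e]
  refine og_sinneg2 hn (by exact_mod_cast h1) ?_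
  have h3 : (2*d : ℕ) < 2*n := by omega
  exact_mod_cast h3

lemma og_val_add_one {n : ℕ} [NeZero n] (hn : 5 ≤ n) (k : Fin n) :
    ((k + 1 : Fin n)).val = (k.val + 1) % n := by
  rw [Fin.add_def]
  simp only [Fin.val_one', Nat.mod_eq_of_lt (show 1 < n by omega)]

open scoped Fin.CommRing in
lemma og_center_sep {n m : ℕ} [NeZero n] (hm : n = 2*m+1) (hm2 : 2 ≤ m) (k i : Fin n) :
    SepLine ((0,0):ℝ×ℝ) (vtx n i) (vtx n k) (vtx n (k+1)) ↔ i = k - (m : Fin n) := by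
  have hn : 0 < n := Nat.pos_of_ne_zero (NeZero.ne n)
  have hn5 : 5 ≤ n := by omega
  have hmn : m < n := by omega
  have hiff : i = k - (m : Fin n) ↔ (k - i).val = m := by
    constructor
    · intro h
      rw [h, sub_sub_cancel, Fin.val_cast_of_lt hmn]
    · intro h
      have h2 : k - i = (m : Fin n) := Fin.ext (by rw [h, Fin.val_cast_of_lt hmn])
      rw [← h2, sub_sub_cancel]
  unfold SepLine
  rw [og_det_center n i k, og_det_center n i (k+1),
    og_sin_vtx_diff n k i, og_sin_vtx_diff n (k+1) i]
  have hke : (k + 1 - i) = (k - i) + 1 := by ring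
  rw [hke, hiff]
  have hdlt : (k - i).val < n := (k - i).isLt
  have he : ((k - i) + 1).val = ((k - i).val + 1) % n := og_val_add_one hn5 (k - i)
  rcases eq_or_ne ((k - i).val) 0 with h0 | h0
  · have hz : Real.sin (2*Real.pi*(((k - i).val : ℕ):ℝ)/n) = 0 := by rw [h0]; norm_num
    rw [hz, zero_mul]
    constructor
    · intro h; exact absurd h (lt_irrefl 0)
    · intro h; exfalso; omega
  rcases eq_or_ne ((k - i).val) (n - 1) with hlast | hlast
  · have he0 : ((k - i) + 1).val = 0 := by
      rw [he, hlast, Nat.sub_add_cancel (by omega : 1 ≤ n), Nat.mod_self]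
    have hz : Real.sin (2*Real.pi*(((k - i) + 1).val:ℝ)/n) = 0 := by rw [he0]; norm_num
    rw [hz, mul_zero]
    constructor
    · intro h; exact absurd h (lt_irrefl 0)
    · intro h; exfalso; omega
  · have he1 : ((k - i) + 1).val = (k - i).val + 1 := by
      rw [he, Nat.mod_eq_of_lt (by omega)]
    rw [he1]
    rcases lt_trichotomy ((k - i).val) m with hc | hc | hc
    · have s1 : 0 < Real.sin (2*Real.pi*(((k - i).val : ℕ):ℝ)/n) := og_s_pos hn (by omega) (by omega)
      have s2 : 0 < Real.sin (2*Real.pi*((((k - i).val)+1 : ℕ):ℝ)/n) := og_s_pos hn (by omega) (by omega)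
      constructor
      · intro h; exfalso; nlinarith
      · intro h; exact absurd h (by omega)
    · have s1 : 0 < Real.sin (2*Real.pi*(((k - i).val : ℕ):ℝ)/n) := og_s_pos hn (by omega) (by omega)
      have s2 : Real.sin (2*Real.pi*((((k - i).val)+1 : ℕ):ℝ)/n) < 0 := og_s_neg hn (by omega) (by omega)
      constructor
      · intro _; exact hc
      · intro _; push_cast; push_cast at s1 s2; nlinarith
    · have s1 : Real.sin (2*Real.pi*(((k - i).val : ℕ):ℝ)/n) < 0 := og_s_neg hn (by omega) (by omega)
      have s2 : Real.sin (2*Real.pi*((((k - i).val)+1 : ℕ):ℝ)/n) < 0 := og_s_neg hn (by omega) (by omega)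
      constructor
      · intro h; exfalso; nlinarith
      · intro h; exact absurd h (by omega)

lemma og_F_sign {n m : ℕ} [NeZero n] (hm : n = 2*m+1) (hm2 : 2 ≤ m) (k t : Fin n)
    (h1 : t ≠ k) (h2 : t ≠ k + 1) :
    (k.val + 1 < n →
      0 < Real.sin (Real.pi * ((k.val:ℝ) - t.val)/n)
        * Real.sin (Real.pi * (((k+1 : Fin n).val:ℝ) - t.val)/n)) ∧
    (k.val + 1 = n →
      Real.sin (Real.pi * ((k.val:ℝ) - t.val)/n)
        * Real.sin (Real.pi * (((k+1 : Fin n).val:ℝ) - t.val)/n) < 0) := by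
  have hn : 0 < n := Nat.pos_of_ne_zero (NeZero.ne n)
  have hn5 : 5 ≤ n := by omega
  have hkv : ((k + 1 : Fin n)).val = (k.val + 1) % n := og_val_add_one hn5 k
  have htk : t.val ≠ k.val := fun h => h1 (Fin.ext h)
  have htk1 : t.val ≠ (k + 1 : Fin n).val := fun h => h2 (Fin.ext h)
  have htlt : t.val < n := t.isLt
  have hklt : k.val < n := k.isLt
  constructor
  · intro hlt
    have hk1 : ((k + 1 : Fin n)).val = k.val + 1 := by
      rw [hkv, Nat.mod_eq_of_lt hlt]
    rw [hk1]
    rcases lt_or_gt_of_ne htk with hcase | hcase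
    · -- t.val < k.val
      have a1 : 0 < Real.sin (Real.pi * ((k.val:ℝ) - t.val)/n) := by
        apply og_sinpos hn
        · have : (t.val:ℝ) < k.val := by exact_mod_cast hcase
          linarith
        · have c1 : (k.val:ℝ) < n := by exact_mod_cast hklt
          have c2 : (0:ℝ) ≤ t.val := by positivity
          linarith
      have a2 : 0 < Real.sin (Real.pi * (((k.val:ℕ):ℝ) + 1 - t.val)/n) := by
        apply og_sinpos hn
        · have : (t.val:ℝ) < k.val := by exact_mod_cast hcase
          linarith
        · have c1 : (k.val:ℝ) + 1 < n := by exact_mod_cast hlt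
          have c2 : (0:ℝ) ≤ t.val := by positivity
          linarith
      have e : ((k.val + 1 : ℕ):ℝ) - t.val = ((k.val:ℕ):ℝ) + 1 - t.val := by push_cast; ring
      rw [e]
      exact mul_pos a1 a2
    · -- t.val > k.val, and ≠ k.val+1 so t.val > k.val + 1
      have hgt : k.val + 1 < t.val := by omega
      have a1 : Real.sin (Real.pi * ((k.val:ℝ) - t.val)/n) < 0 := by
        apply og_sinneg hn
        · have c1 : (t.val:ℝ) < n := by exact_mod_cast htlt
          have c2 : (0:ℝ) ≤ k.val := by positivity
          linarith
        · have : (k.val:ℝ) < t.val := by exact_mod_cast hcase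
          linarith
      have a2 : Real.sin (Real.pi * (((k.val:ℕ):ℝ) + 1 - t.val)/n) < 0 := by
        apply og_sinneg hn
        · have c1 : (t.val:ℝ) < n := by exact_mod_cast htlt
          have c2 : (0:ℝ) ≤ k.val := by positivity
          linarith
        · have : (k.val:ℝ) + 1 < t.val := by exact_mod_cast hgt
          linarith
      have e : ((k.val + 1 : ℕ):ℝ) - t.val = ((k.val:ℕ):ℝ) + 1 - t.val := by push_cast; ring
      rw [e]
      exact mul_pos_of_neg_of_neg a1 a2
  · intro heq
    have hk1 : ((k + 1 : Fin n)).val = 0 := by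
      rw [hkv, heq, Nat.mod_self]
    rw [hk1]
    have ht1 : 1 ≤ t.val := by omega
    have ht2 : t.val ≤ n - 2 := by omega
    have a1 : 0 < Real.sin (Real.pi * ((k.val:ℝ) - t.val)/n) := by
      apply og_sinpos hn
      · have : (t.val:ℝ) < k.val := by exact_mod_cast (by omega : t.val < k.val)
        linarith
      · have c1 : (k.val:ℝ) < n := by exact_mod_cast hklt
        have c2 : (0:ℝ) ≤ t.val := by positivity
        linarith
    have a2 : Real.sin (Real.pi * (((0:ℕ):ℝ) - t.val)/n) < 0 := by
      apply og_sinneg hn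
      · have c1 : (t.val:ℝ) < n := by exact_mod_cast htlt
        push_cast; linarith
      · have : (0:ℝ) < t.val := by exact_mod_cast ht1
        push_cast; linarith
    exact mul_neg_of_pos_of_neg a1 a2

lemma og_chord_nosep {n m : ℕ} [NeZero n] (hm : n = 2*m+1) (hm2 : 2 ≤ m) (k i j : Fin n)
    (hi1 : i ≠ k) (hi2 : i ≠ k + 1) (hj1 : j ≠ k) (hj2 : j ≠ k + 1) :
    ¬ SepLine (vtx n i) (vtx n j) (vtx n k) (vtx n (k+1)) := by
  intro h
  unfold SepLine at h
  rw [og_det_vtx n i j k, og_det_vtx n i j (k+1)] at h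
  have hFi := og_F_sign hm hm2 k i hi1 hi2
  have hFj := og_F_sign hm hm2 k j hj1 hj2
  have hn : 0 < n := Nat.pos_of_ne_zero (NeZero.ne n)
  set s := Real.sin (Real.pi * ((j.val:ℝ) - i.val)/n) with hs
  set a1 := Real.sin (Real.pi * ((k.val:ℝ) - i.val)/n) with ha1
  set a2 := Real.sin (Real.pi * (((k+1 : Fin n).val:ℝ) - i.val)/n) with ha2
  set b1 := Real.sin (Real.pi * ((k.val:ℝ) - j.val)/n) with hb1
  set b2 := Real.sin (Real.pi * (((k+1 : Fin n).val:ℝ) - j.val)/n) with hb2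
  have h2 : (4*s*a1*b1)*(4*s*a2*b2) = 16*s^2*((a1*a2)*(b1*b2)) := by ring
  rw [h2] at h
  have hff : 0 < (a1*a2)*(b1*b2) := by
    rcases lt_or_eq_of_le (Nat.succ_le_of_lt k.isLt) with hlt | heq
    · exact mul_pos (hFi.1 hlt) (hFj.1 hlt)
    · exact mul_pos_of_neg_of_neg (hFi.2 (by omega)) (hFj.2 (by omega))
  nlinarith [sq_nonneg s, hff]

/-- For odd `n ≥ 5`, two adjacent vertices `P,Q` of the regular `n`-gon with its
center satisfy `n(P,Q) = 1`, and any separating line spanned by two other points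
of the configuration passes through the center. -/
theorem adjacent_vertices_ngon_center (n : ℕ) [NeZero n] (hn : 5 ≤ n) (hodd : Odd n)
    (k : Fin n) :
    nsep (ngonWithCenter n) (vtx n k) (vtx n (k + 1)) = 1 ∧
    ∀ A ∈ ngonWithCenter n, ∀ B ∈ ngonWithCenter n, A ≠ B →
      A ≠ vtx n k → A ≠ vtx n (k + 1) → B ≠ vtx n k → B ≠ vtx n (k + 1) →
      SepLine A B (vtx n k) (vtx n (k + 1)) → A = (0, 0) ∨ B = (0, 0) := by
  obtain ⟨m, hm⟩ := hodd
  have hm2 : 2 ≤ m := by omega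
  have hmn : m < n := by omega
  have hinj := og_vtx_inj n
  have part2 : ∀ A ∈ ngonWithCenter n, ∀ B ∈ ngonWithCenter n, A ≠ B →
      A ≠ vtx n k → A ≠ vtx n (k + 1) → B ≠ vtx n k → B ≠ vtx n (k + 1) →
      SepLine A B (vtx n k) (vtx n (k + 1)) → A = (0, 0) ∨ B = (0, 0) := by
    intro A hA B hB hAB hAP hAQ hBP hBQ hsep
    by_contra hcon
    push_neg at hcon
    obtain ⟨hA0, hB0⟩ := hcon
    rw [ngonWithCenter, Finset.mem_insert, Finset.mem_image] at hA hB
    obtain ⟨i, -, hi⟩ := hA.resolve_left hA0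
    obtain ⟨j, -, hj⟩ := hB.resolve_left hB0
    subst hi; subst hj
    have hi1 : i ≠ k := fun h => hAP (by rw [h])
    have hi2 : i ≠ k + 1 := fun h => hAQ (by rw [h])
    have hj1 : j ≠ k := fun h => hBP (by rw [h])
    have hj2 : j ≠ k + 1 := fun h => hBQ (by rw [h])
    exact og_chord_nosep hm hm2 k i j hi1 hi2 hj1 hj2 hsep
  refine ⟨?_, part2⟩
  open scoped Fin.CommRing in set i0 : Fin n := k - (m : Fin n) with hi0
  open scoped Fin.CommRing in
  have hi0k : i0 ≠ k := by
    intro h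
    have h2 : (m : Fin n) = 0 := sub_eq_self.mp h
    have h3 := congrArg Fin.val h2
    rw [Fin.val_cast_of_lt hmn] at h3
    simp at h3
    omega
  open scoped Fin.CommRing in
  have hi0k1 : i0 ≠ k + 1 := by
    intro h
    have h3 : (m : Fin n) = k - (k + 1) := by rw [← h, hi0, sub_sub_cancel]
    have h4 : (m : Fin n) + 1 = 0 := by rw [h3]; ring
    have h5 := congrArg Fin.val h4
    rw [og_val_add_one (by omega) ((m : ℕ) : Fin n), Fin.val_cast_of_lt hmn,
      Nat.mod_eq_of_lt (by omega)] at h5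
    simp at h5
  have hsep0 : SepLine ((0,0):ℝ×ℝ) (vtx n i0) (vtx n k) (vtx n (k+1)) :=
    (og_center_sep hm hm2 k i0).mpr rfl
  have h0P : ((0,0):ℝ×ℝ) ≠ vtx n k := Ne.symm (og_vtx_ne_zero n k)
  have h0Q : ((0,0):ℝ×ℝ) ≠ vtx n (k+1) := Ne.symm (og_vtx_ne_zero n (k+1))
  have h0i0 : ((0,0):ℝ×ℝ) ≠ vtx n i0 := Ne.symm (og_vtx_ne_zero n i0)
  set s0 : Finset (ℝ×ℝ) := {((0,0):ℝ×ℝ), vtx n i0} with hs0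
  have hcard : s0.card = 2 := Finset.card_pair h0i0
  have hvC : ∀ t : Fin n, vtx n t ∈ ngonWithCenter n := by
    intro t
    rw [ngonWithCenter, Finset.mem_insert]
    exact Or.inr (Finset.mem_image.mpr ⟨t, Finset.mem_univ t, rfl⟩)
  have hsub : s0 ⊆ (ngonWithCenter n) \ {vtx n k, vtx n (k+1)} := by
    intro x hx
    rw [hs0, Finset.mem_insert, Finset.mem_singleton] at hx
    rw [Finset.mem_sdiff, Finset.mem_insert, Finset.mem_singleton]
    rcases hx with rfl | rfl
    · refine ⟨?_, ?_⟩
      · rw [ngonWithCenter]; exact Finset.mem_insert_self _ _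
      · push_neg; exact ⟨h0P, h0Q⟩
    · refine ⟨hvC i0, ?_⟩
      push_neg
      exact ⟨fun h => hi0k (hinj h), fun h => hi0k1 (hinj h)⟩
  have hmem0 : ((0,0):ℝ×ℝ) ∈ s0 := Finset.mem_insert_self _ _
  have hmemv : vtx n i0 ∈ s0 := by
    rw [hs0]; exact Finset.mem_insert_of_mem (Finset.mem_singleton_self _)
  have hmemfilter : s0 ∈ (((ngonWithCenter n \ {vtx n k, vtx n (k+1)}).powersetCard 2).filter
      (fun s => ∃ A ∈ s, ∃ B ∈ s, A ≠ B ∧ SepLine A B (vtx n k) (vtx n (k+1)))) := by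
    rw [Finset.mem_filter, Finset.mem_powersetCard]
    exact ⟨⟨hsub, hcard⟩, ⟨(0,0), hmem0, vtx n i0, hmemv, h0i0, hsep0⟩⟩
  have huniq : ∀ s ∈ (((ngonWithCenter n \ {vtx n k, vtx n (k+1)}).powersetCard 2).filter
      (fun s => ∃ A ∈ s, ∃ B ∈ s, A ≠ B ∧ SepLine A B (vtx n k) (vtx n (k+1)))), s = s0 := by
    intro s hs
    rw [Finset.mem_filter, Finset.mem_powersetCard] at hs
    obtain ⟨⟨hsub', hcard'⟩, A, hAs, B, hBs, hABne, hsepAB⟩ := hs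
    have hA' := hsub' hAs
    have hB' := hsub' hBs
    rw [Finset.mem_sdiff, Finset.mem_insert, Finset.mem_singleton] at hA' hB'
    obtain ⟨hAC, hAnot⟩ := hA'
    obtain ⟨hBC, hBnot⟩ := hB'
    push_neg at hAnot hBnot
    have hkey : ((0,0):ℝ×ℝ) ∈ s ∧ vtx n i0 ∈ s := by
      rcases part2 A hAC B hBC hABne hAnot.1 hAnot.2 hBnot.1 hBnot.2 hsepAB with h0 | h0
      · subst h0
        have hB0 : B ≠ ((0,0):ℝ×ℝ) := fun h => hABne (h ▸ rfl)
        rw [ngonWithCenter, Finset.mem_insert, Finset.mem_image] at hBC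
        obtain ⟨j, -, hj⟩ := hBC.resolve_left hB0
        subst hj
        have : j = i0 := (og_center_sep hm hm2 k j).mp hsepAB
        subst this
        exact ⟨hAs, hBs⟩
      · subst h0
        have hA0 : A ≠ ((0,0):ℝ×ℝ) := fun h => hABne (h ▸ rfl)
        rw [ngonWithCenter, Finset.mem_insert, Finset.mem_image] at hAC
        obtain ⟨j, -, hj⟩ := hAC.resolve_left hA0
        subst hj
        have hsep' := og_sep_symm hsepAB
        have : j = i0 := (og_center_sep hm hm2 k j).mp hsep'
        subst this
        exact ⟨hBs, hAs⟩
    have hsub0 : s0 ⊆ s := by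
      intro x hx
      rw [hs0, Finset.mem_insert, Finset.mem_singleton] at hx
      rcases hx with rfl | rfl
      · exact hkey.1
      · exact hkey.2
    exact (Finset.eq_of_subset_of_card_le hsub0 (by rw [hcard', hcard])).symm
  have hfilter : (((ngonWithCenter n \ {vtx n k, vtx n (k+1)}).powersetCard 2).filter
      (fun s => ∃ A ∈ s, ∃ B ∈ s, A ≠ B ∧ SepLine A B (vtx n k) (vtx n (k+1)))) = {s0} :=
    Finset.eq_singleton_iff_unique_mem.mpr ⟨hmemfilter, huniq⟩
  rw [nsep, hfilter, Finset.card_singleton]
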